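/- Fix κ² > 0. Let θ : [−π, π] → ℝ be C¹ with θ(π) = θ(−π) (degree-one class). Then ∫_{−π}^{π} ( |θ'(t) + 1|² + κ² sin²θ(t) ) dt ≥ 2π, with equality if and only if θ is constant and sin θ = 0, i.e., if and only if the corresponding in-plane map is m_⊥ = n or m_⊥ = −n. -/

import Mathlib

open Real Set MeasureTheory

/-- **Degree-one in-plane lower bound**: for `C¹` `θ` with `θ(π) = θ(−π)`,
`∫_{−π}^{π} (|θ' + 1|² + κ² sin²θ) dt ≥ 2π`, with equality if and only if `θ` is
constant on `[−π, π]` with `sin θ = 0` (i.e. the corresponding in-plane map is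
`±n`). -/
theorem degree_one_inplane_bound
    (κ : ℝ) (hκ : 0 < κ ^ 2)
    (θ : ℝ → ℝ) (hθ : ContDiff ℝ 1 θ)
    (hdeg : θ π = θ (-π)) :
    2 * π ≤ ∫ t in (-π)..π, ((deriv θ t + 1) ^ 2 + κ ^ 2 * Real.sin (θ t) ^ 2) ∧
    ((∫ t in (-π)..π, ((deriv θ t + 1) ^ 2 + κ ^ 2 * Real.sin (θ t) ^ 2)) = 2 * π ↔
      ∃ c : ℝ, (∀ t ∈ Icc (-π) π, θ t = c) ∧ Real.sin c = 0) := by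
  have hπ : (-π : ℝ) < π := by linarith [pi_pos]
  have hθd : Continuous (deriv θ) := hθ.continuous_deriv le_rfl
  have hθc : Continuous θ := hθ.continuous
  set g : ℝ → ℝ := fun t => (deriv θ t) ^ 2 + κ ^ 2 * Real.sin (θ t) ^ 2 with hg_def
  have hg_cont : Continuous g := by
    exact (hθd.pow 2).add (continuous_const.mul (((Real.continuous_sin.comp hθc).pow 2)))
  have hg_nonneg : ∀ t, 0 ≤ g t := fun t => by positivity
  have hg_int : IntervalIntegrable g volume (-π) π := hg_cont.intervalIntegrable _ _
  have hd_int : IntervalIntegrable (fun t => 2 * deriv θ t + 1) volume (-π) π :=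
    ((continuous_const.mul hθd).add continuous_const).intervalIntegrable _ _
  have hderiv_int : (∫ t in (-π)..π, deriv θ t) = θ π - θ (-π) :=
    intervalIntegral.integral_deriv_eq_sub
      (fun x _ => (hθ.differentiable one_ne_zero) x) (hθd.intervalIntegrable _ _)
  have key : (∫ t in (-π)..π, ((deriv θ t + 1) ^ 2 + κ ^ 2 * Real.sin (θ t) ^ 2))
      = (∫ t in (-π)..π, g t) + 2 * π := by
    have heq : ∀ t, ((deriv θ t + 1) ^ 2 + κ ^ 2 * Real.sin (θ t) ^ 2)
        = g t + (2 * deriv θ t + 1) := fun t => by simp only [hg_def]; ring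
    rw [show (fun t => ((deriv θ t + 1) ^ 2 + κ ^ 2 * Real.sin (θ t) ^ 2))
        = fun t => g t + (2 * deriv θ t + 1) from funext heq]
    rw [intervalIntegral.integral_add hg_int hd_int,
      intervalIntegral.integral_add (f := fun t => 2 * deriv θ t) (g := fun _ => (1:ℝ)) ((continuous_const.mul hθd).intervalIntegrable _ _)
        (intervalIntegrable_const),
      intervalIntegral.integral_const_mul, hderiv_int, hdeg]
    simp
    ring
  have hg_nn : 0 ≤ ∫ t in (-π)..π, g t :=
    intervalIntegral.integral_nonneg hπ.le (fun u _ => hg_nonneg u)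
  constructor
  · rw [key]; linarith
  constructor
  · intro heq
    have hg0 : (∫ t in (-π)..π, g t) = 0 := by rw [key] at heq; linarith
    have hzero : ∀ x ∈ Icc (-π) π, g x = 0 := by
      intro x hx
      by_contra h
      have hpos : 0 < ∫ t in (-π)..π, g t :=
        intervalIntegral.integral_pos hπ hg_cont.continuousOn
          (fun u _ => hg_nonneg u) ⟨x, hx, lt_of_le_of_ne (hg_nonneg x) (Ne.symm h)⟩
      linarith
    have hparts : ∀ x ∈ Icc (-π) π, deriv θ x = 0 ∧ Real.sin (θ x) = 0 := by
      intro x hx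
      have h1 := hzero x hx
      have h2 : (0:ℝ) ≤ (deriv θ x) ^ 2 := sq_nonneg _
      have h3 : (0:ℝ) ≤ Real.sin (θ x) ^ 2 := sq_nonneg _
      have h3' : (0:ℝ) ≤ κ ^ 2 * Real.sin (θ x) ^ 2 := by positivity
      have hd2 : (deriv θ x) ^ 2 = 0 := by simp only [hg_def] at h1; linarith
      have hs2 : κ ^ 2 * Real.sin (θ x) ^ 2 = 0 := by simp only [hg_def] at h1; linarith
      have hs2' : Real.sin (θ x) ^ 2 = 0 := by
        rcases mul_eq_zero.mp hs2 with h | h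
        · exact absurd h (ne_of_gt hκ)
        · exact h
      exact ⟨pow_eq_zero_iff two_ne_zero |>.mp hd2, pow_eq_zero_iff two_ne_zero |>.mp hs2'⟩
    have hdiff : DifferentiableOn ℝ θ (Icc (-π) π) :=
      (hθ.differentiable one_ne_zero).differentiableOn
    have hdw : ∀ x ∈ Ico (-π) π, derivWithin θ (Icc (-π) π) x = 0 := by
      intro x hx
      rw [DifferentiableAt.derivWithin ((hθ.differentiable one_ne_zero) x)
        ((uniqueDiffOn_Icc hπ) x (Ico_subset_Icc_self hx))]
      exact (hparts x (Ico_subset_Icc_self hx)).1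
    have hconst := constant_of_derivWithin_zero hdiff hdw
    exact ⟨θ (-π), fun t ht => hconst t ht,
      (hparts (-π) ⟨le_rfl, hπ.le⟩).2⟩
  · intro ⟨c, hc, hsc⟩
    have hder0 : ∀ x ∈ Ioo (-π) π, deriv θ x = 0 := by
      intro x hx
      have hev : θ =ᶠ[nhds x] fun _ => c :=
        Filter.eventuallyEq_of_mem (isOpen_Ioo.mem_nhds hx)
          (fun y hy => hc y (Ioo_subset_Icc_self hy))
      rw [hev.deriv_eq]; simp
    have hder0' : ∀ x ∈ Icc (-π) π, deriv θ x = 0 := by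
      have hEq : Set.EqOn (deriv θ) (fun _ => (0:ℝ)) (Ioo (-π) π) := fun x hx => hder0 x hx
      have : Set.EqOn (deriv θ) (fun _ => (0:ℝ)) (closure (Ioo (-π) π)) :=
        hEq.closure hθd continuous_const
      intro x hx
      have := this (by rw [closure_Ioo hπ.ne]; exact hx)
      exact this
    have hgzero : EqOn g (fun _ => (0:ℝ)) (uIcc (-π) π) := by
      intro x hx
      rw [uIcc_of_le hπ.le] at hx
      simp only [hg_def, hder0' x hx, hc x hx, hsc]
      ring
    rw [key, intervalIntegral.integral_congr hgzero]
    simp
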